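/- arXiv:2506.15457 — 2 statements merged into one kernel-verified Lean document; each statement's English description precedes it below -/
import Mathlib

section
/- Let $K \neq \partial\Delta^{m-1}$ be an $(n-1)$-dimensional Gorenstein* complex on $m$ vertices over a field $k$, with Stanley–Reisner ring $k[K]$ such that $I_K$ is generated in degree $d$ and satisfies condition $N_{d,m-n-1}$ (almost linear resolution). Then $n = 2d-2$, and the only nonzero graded Betti numbers of $k[K]$ are $\beta_{0,0} = 1$, $\beta_{i,i+d-1}$ for $1 \leq i \leq m-n-1$, and $\beta_{m-n,m} = 1$. -/
/-!
STATEMENT 7.  Let `K ≠ ∂Δ^{m-1}` be an `(n-1)`-dimensional Gorenstein* complex on `m`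
vertices over a field `k`, such that the Stanley–Reisner ideal `I_K` is generated in degree
`d` and satisfies condition `N_{d,m-n-1}` (almost linear resolution).  Then `n = 2d - 2`,
and the only nonzero graded Betti numbers of `k[K]` are `β 0 0 = 1`,
`β i (i+d-1)` for `1 ≤ i ≤ m-n-1`, and `β (m-n) m = 1`.

The graded Betti numbers `β i j = dim_k Tor^S_i(k[K],k)_j` are abstracted as a function
`β : ℕ → ℕ → ℕ`; the standard facts granted by the Gorenstein* hypothesis (projective
dimension `m - n`, Poincaré duality of Betti numbers, Castelnuovo–Mumford regularity `n`,
the one-dimensional top Betti number in bidegree `(m-n, m)`) are recorded as hypotheses,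
exactly as listed in the context.
-/
theorem stmt7
    (m n d : ℕ)
    (β : ℕ → ℕ → ℕ)  -- β i j = dim_k Tor^S_i(k[K], k)_j
    (hn : 1 ≤ n) (hd : 1 ≤ d)
    (hnm : n < m)
    -- K ≠ ∂Δ^{m-1} and K Gorenstein*, hence projdim_S k[K] = m - n > 1
    (hproj : 1 < m - n)
    -- β 0 0 = 1 is the only Betti number in homological degree 0
    (hβ0 : β 0 0 = 1) (hβ0' : ∀ j, j ≠ 0 → β 0 j = 0)
    -- the top Betti number: β (m-n) m = 1, corresponding to Tor_{m-n}(k[K],k)_m ≅ H̃^{n-1}(K;k)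
    (htop : β (m - n) m = 1) (htop' : ∀ j, j ≠ m → β (m - n) j = 0)
    -- Poincaré duality of Betti numbers coming from Gorensteinness
    (hpd : ∀ i j, i ≤ m - n → j ≤ m → β i j = β (m - n - i) (m - j))
    -- Castelnuovo–Mumford regularity of k[K] equals n
    (hreg : ∀ i j, n + i < j → β i j = 0)
    -- projective dimension m - n
    (hpdim : ∀ i j, m - n < i → β i j = 0)
    -- I_K is generated in degree d (so β_{i,j}(k[K]) = 0 for j < i + d - 1 when i ≥ 1)
    (hmind : ∀ i j, 1 ≤ i → j < i + d - 1 → β i j = 0)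
    (hgen : β 1 d ≠ 0)
    (hgen' : ∀ j, j ≠ d → β 1 j = 0)
    -- condition N_{d, m-n-1} for I_K: the resolution of I_K is linear in the first
    -- m - n - 1 steps, i.e. β_{i,j}(k[K]) = 0 for j ≠ i + d - 1 whenever 1 ≤ i ≤ m - n - 1
    (hlin : ∀ i j, 1 ≤ i → i ≤ m - n - 1 → β i j ≠ 0 → j = i + d - 1) :
    n = 2 * d - 2 ∧
      ∀ i j, β i j ≠ 0 →
        (i = 0 ∧ j = 0) ∨ (1 ≤ i ∧ i ≤ m - n - 1 ∧ j = i + d - 1) ∨ (i = m - n ∧ j = m):= by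
  -- d ≤ n+1 from regularity at (1,d)
  have hdn : d ≤ n + 1 := by
    by_contra h
    exact hgen (hreg 1 d (by omega))
  -- duality: β 1 d = β (m-n-1) (m-d)
  have hdual : β 1 d = β (m - n - 1) (m - d) := by
    have := hpd 1 d (by omega) (by omega)
    simpa using this
  have hne : β (m - n - 1) (m - d) ≠ 0 := by rw [← hdual]; exact hgen
  have hkey := hlin (m - n - 1) (m - d) (by omega) (le_refl _) hne
  have hnval : n = 2 * d - 2 := by omega
  refine ⟨hnval, ?_⟩
  intro i j hij
  rcases Nat.eq_zero_or_pos i with hi0 | hi1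
  · subst hi0
    left
    refine ⟨rfl, ?_⟩
    by_contra hj
    exact hij (hβ0' j hj)
  · by_cases hile : i ≤ m - n - 1
    · exact Or.inr (Or.inl ⟨hi1, hile, hlin i j hi1 hile hij⟩)
    · by_cases hie : i = m - n
      · subst hie
        right; right
        refine ⟨rfl, ?_⟩
        by_contra hj
        exact hij (htop' j hj)
      · exact absurd (hpdim i j (by omega)) hij
end

section
/- Let $K$ be a simplicial complex on $[m]$ with no ghost vertices. For each subset $U \subseteq [m]$ the assignment $v_I \lambda_{U \smallsetminus I} \mapsto (-1)^{\varepsilon(I,U)} I$, where $\varepsilon(I,U) = |\{(i,u) \in I \times U : i > u\}|$, defines an isomorphism of chain complexes from the squarefree co-Koszul complex component $R^*(K)_U = \mathrm{span}\{v_I\lambda_J : I \in K,\; I \sqcup J = U\}$ (with differential $\partial(v_I\lambda_J) = \sum_{i\in I} v_{I\smallsetminus i}\lambda_i\wedge\lambda_J$) to the augmented simplicial chain complex $\widetilde{C}_{|U|+*-1}(K_U;k)$ of the full subcomplex $K_U$, where $\widetilde{C}_{-1}(\varnothing;k) = k$. -/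
open Finset

section

variable (m : ℕ) (k : Type) [CommRing k]
variable (isFace : Finset (Fin m) → Prop) [DecidablePred isFace]
variable (U : Finset (Fin m))

/-- Basis of `R^i(K)_U`: pairs `v_I λ_J` with `I ∈ K`, `I ⊔ J = U`, `|J| = i`;
such a pair is determined by the face `I ⊆ U` with `(U \ I).card = i`. -/
def RIdx (i : ℕ) :=
  {I : Finset (Fin m) // isFace I ∧ I ⊆ U ∧ (U \ I).card = i}

/-- Basis of the augmented chain complex `C̃(K_U; k)`, indexed complementarily:
faces `s` of `K_U` with `s.card + i = U.card` (so `s` lies in chain degree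
`|U| - i - 1`). -/
def CIdx (i : ℕ) :=
  {s : Finset (Fin m) // isFace s ∧ s ⊆ U ∧ s.card + i = U.card}

/-- The sign `(-1)^{ε(s,U)}` with `ε(s,U) = #{(i,u) ∈ s × U : i > u}`. -/
def epsSign (s : Finset (Fin m)) : k :=
  (-1 : k) ^ (∑ x ∈ s, (U.filter (· < x)).card)

variable {m U}

/-- The co-Koszul differential `∂(v_I λ_J) = ∑_{x ∈ I} v_{I∖x} λ_x ∧ λ_J`, written in the
coordinates of the basis `RIdx`. -/
def dR (i : ℕ) (φ : RIdx m isFace U i → k) : RIdx m isFace U (i + 1) → k :=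
  fun I' => ∑ v ∈ (U \ I'.1).attach,
    if hf : isFace (insert v.1 I'.1) then
      ((-1 : k) ^ (((U \ insert v.1 I'.1).filter (· < v.1)).card)) *
        φ ⟨insert v.1 I'.1,
           hf,
           insert_subset (mem_sdiff.mp v.2).1 I'.2.2.1,
           by
             have hv : v.1 ∈ U \ I'.1 := v.2
             have h1 : U \ insert v.1 I'.1 = (U \ I'.1).erase v.1 := by
               rw [Finset.sdiff_insert]
             rw [h1, Finset.card_erase_of_mem hv, I'.2.2.2]; omega⟩
    else 0

/-- The simplicial boundary of the augmented chain complex of `K_U`, in the same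
(complementary) indexing. -/
def dC (i : ℕ) (φ : CIdx m isFace U i → k) : CIdx m isFace U (i + 1) → k :=
  fun t => ∑ v ∈ (U \ t.1).attach,
    if hf : isFace (insert v.1 t.1) then
      ((-1 : k) ^ ((t.1.filter (· < v.1)).card)) *
        φ ⟨insert v.1 t.1,
           hf,
           insert_subset (mem_sdiff.mp v.2).1 t.2.2.1,
           by
             have hv : v.1 ∉ t.1 := (mem_sdiff.mp v.2).2
             rw [Finset.card_insert_of_notMem hv]
             have := t.2.2.2
             omega⟩
    else 0

/-- Hochster's isomorphism `v_I λ_{U∖I} ↦ (-1)^{ε(I,U)} I`. -/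
def PhiMap (i : ℕ) (φ : RIdx m isFace U i → k) : CIdx m isFace U i → k :=
  fun s =>
    epsSign m k U s.1 *
      φ ⟨s.1, s.2.1, s.2.2.1, by
        have h := Finset.card_sdiff_of_subset s.2.2.1
        have h2 := s.2.2.2
        have h3 := Finset.card_le_card s.2.2.1
        omega⟩

end

/-!
STATEMENT 9.  Let `K` be a simplicial complex on `[m]` with no ghost vertices.  For each
`U ⊆ [m]`, the assignment `v_I λ_{U∖I} ↦ (-1)^{ε(I,U)} I` defines an isomorphism of chain
complexes from the squarefree co-Koszul complex component `R^*(K)_U` (with differential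
`∂(v_I λ_J) = ∑_{x ∈ I} v_{I∖x} λ_x ∧ λ_J`) to the augmented simplicial chain complex
`C̃_{|U|+*-1}(K_U; k)` of the full subcomplex `K_U` (with `C̃_{-1}(∅;k) = k`).

Here the map `PhiMap` is `k`-linear, bijective in every degree, and commutes with the
differentials.
-/
lemma neg_one_pow_mod2 {k : Type} [CommRing k] (p q : ℕ) (h : p % 2 = q % 2) :
    (-1 : k) ^ p = (-1) ^ q := by
  rw [← Nat.div_add_mod p 2, ← Nat.div_add_mod q 2, h, pow_add, pow_add, pow_mul, pow_mul,
    neg_one_sq, one_pow, one_pow]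

lemma eps_sq {m : ℕ} (k : Type) [CommRing k] (U s : Finset (Fin m)) :
    epsSign m k U s * epsSign m k U s = 1 := by
  unfold epsSign
  rw [← pow_add, neg_one_pow_mod2 _ 0 (by omega), pow_zero]

lemma sign_key {m : ℕ} (k : Type) [CommRing k] (U t : Finset (Fin m)) (v : Fin m)
    (ht : t ⊆ U) (hv : v ∈ U \ t) :
    epsSign m k U t * (-1 : k) ^ (((U \ insert v t).filter (· < v)).card) =
      (-1 : k) ^ ((t.filter (· < v)).card) * epsSign m k U (insert v t) := by
  have hvt : v ∉ t := (mem_sdiff.mp hv).2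
  have h1 : (U \ insert v t).filter (· < v) = (U \ t).filter (· < v) := by
    ext x
    simp only [Finset.mem_filter, Finset.mem_sdiff, Finset.mem_insert]
    constructor
    · rintro ⟨⟨hxU, hx⟩, hxv⟩; exact ⟨⟨hxU, fun h => hx (Or.inr h)⟩, hxv⟩
    · rintro ⟨⟨hxU, hx⟩, hxv⟩
      exact ⟨⟨hxU, fun h => h.elim (fun h' => absurd h' (ne_of_lt hxv)) hx⟩, hxv⟩
  have h2 : (U.filter (· < v)).card =
      (t.filter (· < v)).card + ((U \ t).filter (· < v)).card := by
    have hU : U.filter (· < v) = t.filter (· < v) ∪ (U \ t).filter (· < v) := by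
      rw [← Finset.filter_union, Finset.union_sdiff_of_subset ht]
    rw [hU, Finset.card_union_of_disjoint]
    refine Finset.disjoint_left.mpr fun x hx hx' => ?_
    exact (Finset.mem_sdiff.mp (Finset.mem_filter.mp hx').1).2 (Finset.mem_filter.mp hx).1
  unfold epsSign
  rw [Finset.sum_insert hvt, h1, ← pow_add, ← pow_add]
  apply neg_one_pow_mod2
  omega

theorem stmt9 (m : ℕ) (k : Type) [CommRing k]
    (isFace : Finset (Fin m) → Prop) [DecidablePred isFace]
    (hdown : ∀ s t : Finset (Fin m), t ⊆ s → isFace s → isFace t)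
    (hvert : ∀ i : Fin m, isFace {i})
    (U : Finset (Fin m)) :
    (∀ i : ℕ, Function.Bijective (PhiMap (m := m) (U := U) k isFace i)) ∧
    (∀ i : ℕ, ∀ φ ψ : RIdx m isFace U i → k,
        PhiMap k isFace i (φ + ψ) = PhiMap k isFace i φ + PhiMap k isFace i ψ) ∧
    (∀ i : ℕ, ∀ (a : k) (φ : RIdx m isFace U i → k),
        PhiMap k isFace i (a • φ) = a • PhiMap k isFace i φ) ∧
    (∀ i : ℕ, ∀ φ : RIdx m isFace U i → k,
        PhiMap k isFace (i + 1) (dR k isFace i φ) = dC k isFace i (PhiMap k isFace i φ)) := by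
  refine ⟨?_, ?_, ?_, ?_⟩
  · intro i
    refine Function.bijective_iff_has_inverse.mpr
      ⟨fun ψ I => epsSign m k U I.1 * ψ ⟨I.1, I.2.1, I.2.2.1, by
          have h := Finset.card_sdiff_of_subset I.2.2.1
          have h2 := I.2.2.2
          have h3 := Finset.card_le_card I.2.2.1
          omega⟩, ?_, ?_⟩
    · intro φ; funext I
      show epsSign m k U I.1 * (epsSign m k U I.1 * φ _) = φ I
      rw [← mul_assoc, eps_sq, one_mul]
      exact congrArg φ (Subtype.ext rfl)
    · intro ψ; funext s
      show epsSign m k U s.1 * (epsSign m k U s.1 * ψ _) = ψ s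
      rw [← mul_assoc, eps_sq, one_mul]
      exact congrArg ψ (Subtype.ext rfl)
  · intro i φ ψ; funext s
    show epsSign m k U s.1 * (φ _ + ψ _) = epsSign m k U s.1 * φ _ + epsSign m k U s.1 * ψ _
    ring
  · intro i a φ; funext s
    show epsSign m k U s.1 * (a * φ _) = a * (epsSign m k U s.1 * φ _)
    ring
  · intro i φ; funext t
    unfold PhiMap dR dC
    dsimp only
    rw [Finset.mul_sum]
    refine Finset.sum_congr rfl fun v _ => ?_
    by_cases hf : isFace (insert v.1 t.1)
    · rw [dif_pos hf, dif_pos hf, ← mul_assoc, ← mul_assoc,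
        sign_key k U t.1 v.1 t.2.2.1 v.2]
    · rw [dif_neg hf, dif_neg hf, mul_zero]
end
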